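/- In the one-dimensional Robbins–Monro setting, if b_k := E[(x̂_k − x*)²] satisfies b_{k+1} ≤ b_k − 2 a_k K b_k + a_k² h² for some K > 0, where Σ a_k = ∞, Σ a_k² < ∞ and a_k > 0, then b_k → 0. -/

import Mathlib

open Filter

/-- Mean-square Robbins–Monro: if `b_k = E[(x̂_k − x*)²] ≥ 0` satisfies
`b_{k+1} ≤ b_k − 2 a_k K b_k + a_k² h²` with `K > 0`, `a_k > 0`, `Σ a_k = ∞`,
`Σ a_k² < ∞`, then `b_k → 0`. -/
theorem robbins_monro_mean_square (b a : ℕ → ℝ) (K h : ℝ) (hK : 0 < K)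
    (hb : ∀ k, 0 ≤ b k) (ha : ∀ k, 0 < a k)
    (hadiv : ¬ Summable a) (hasq : Summable fun k => (a k) ^ 2)
    (hrec : ∀ k, b (k + 1) ≤ b k - 2 * a k * K * b k + (a k) ^ 2 * h ^ 2) :
    Tendsto b atTop (nhds 0) := by
  rw [Metric.tendsto_atTop]
  intro ε hε
  have hε2 : 0 < ε / 2 := by positivity
  -- a → 0
  have ha0 : Tendsto a atTop (nhds 0) := by
    have h2 := hasq.tendsto_atTop_zero
    have h3 : Tendsto (fun k => Real.sqrt ((a k) ^ 2)) atTop (nhds 0) := by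
      have := (Real.continuous_sqrt.tendsto 0).comp h2
      simpa [Function.comp_def] using this
    have heq : (fun k => Real.sqrt ((a k) ^ 2)) = a := by
      funext k; rw [Real.sqrt_sq (ha k).le]
    rwa [heq] at h3
  set c := min (K * (ε / 2) / (h ^ 2 + 1)) (1 / (2 * K)) with hc
  have hcpos : 0 < c := lt_min (by positivity) (by positivity)
  obtain ⟨N, hN⟩ : ∃ N, ∀ k ≥ N, a k < c := by
    rw [Metric.tendsto_atTop] at ha0
    obtain ⟨N, hN⟩ := ha0 c hcpos
    exact ⟨N, fun k hk => by
      have := hN k hk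
      rwa [Real.dist_eq, sub_zero, abs_of_pos (ha k)] at this⟩
  have hA : ∀ k ≥ N, a k * h ^ 2 ≤ K * (ε / 2) := by
    intro k hk
    have h1 : a k < K * (ε / 2) / (h ^ 2 + 1) := lt_of_lt_of_le (hN k hk) (min_le_left _ _)
    have hpos : (0:ℝ) < h ^ 2 + 1 := by positivity
    have h2 : a k * (h ^ 2 + 1) < K * (ε / 2) := by
      calc a k * (h ^ 2 + 1) < (K * (ε / 2) / (h ^ 2 + 1)) * (h ^ 2 + 1) :=
            mul_lt_mul_of_pos_right h1 hpos
        _ = K * (ε / 2) := by field_simp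
    nlinarith [(ha k).le]
  have hB : ∀ k ≥ N, 2 * a k * K ≤ 1 := by
    intro k hk
    have h1 : a k < 1 / (2 * K) := lt_of_lt_of_le (hN k hk) (min_le_right _ _)
    have h2 : a k * (2 * K) < 1 := by
      calc a k * (2 * K) < (1 / (2 * K)) * (2 * K) :=
            mul_lt_mul_of_pos_right h1 (by positivity)
        _ = 1 := by field_simp
    nlinarith
  -- once below ε/2, stays below
  have hstep : ∀ k ≥ N, b k ≤ ε / 2 → b (k + 1) ≤ ε / 2 := by
    intro k hk hbk
    have h1 := hrec k
    have h2 := hA k hk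
    have h3 := hB k hk
    have h4 := (ha k).le
    have h5 := hb k
    nlinarith
  -- some m ≥ N has b m ≤ ε/2
  obtain ⟨m, hmN, hbm⟩ : ∃ m ≥ N, b m ≤ ε / 2 := by
    by_contra hcon
    push_neg at hcon
    have hns : ¬ Summable (fun i => a (N + i)) := by
      intro hs
      apply hadiv
      have hs' : Summable (fun i => a (i + N)) := by
        simpa [add_comm] using hs
      exact (summable_nat_add_iff N).mp hs'
    have hdivS : Tendsto (fun n => ∑ i ∈ Finset.range n, a (N + i)) atTop atTop :=
      (not_summable_iff_tendsto_nat_atTop_of_nonneg (fun i => (ha _).le)).mp hns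
    have key : ∀ n, b (N + n) ≤ b N - K * (ε / 2) * ∑ i ∈ Finset.range n, a (N + i) := by
      intro n
      induction n with
      | zero => simp
      | succ n ih =>
        have hk : N + n ≥ N := Nat.le_add_right _ _
        have hbig := hcon (N + n) hk
        have h1 := hrec (N + n)
        have h2 := hA (N + n) hk
        have h3 := (ha (N + n)).le
        have h4 : b (N + n + 1) ≤ b (N + n) - a (N + n) * K * (ε / 2) := by
          nlinarith [mul_le_mul_of_nonneg_left h2 h3,
            mul_le_mul_of_nonneg_left hbig.le (mul_nonneg h3 hK.le)]
        rw [Finset.sum_range_succ]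
        have heq : N + (n + 1) = N + n + 1 := by ring
        rw [heq]
        nlinarith
    obtain ⟨n, hn⟩ := (hdivS.eventually_ge_atTop ((b N + 1) / (K * (ε / 2)))).exists
    have h5 := key n
    have hKpos : 0 < K * (ε / 2) := by positivity
    have h6 : b N + 1 ≤ K * (ε / 2) * ∑ i ∈ Finset.range n, a (N + i) := by
      calc b N + 1 = K * (ε / 2) * ((b N + 1) / (K * (ε / 2))) := by field_simp
        _ ≤ K * (ε / 2) * ∑ i ∈ Finset.range n, a (N + i) :=
            mul_le_mul_of_nonneg_left hn hKpos.le
    have h7 := hb (N + n)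
    linarith
  have hall : ∀ k, m ≤ k → b k ≤ ε / 2 := by
    intro k hk
    induction k with
    | zero =>
      have hm0 : m = 0 := Nat.le_zero.mp hk
      subst hm0; exact hbm
    | succ k ih =>
      rcases Nat.lt_or_ge m (k + 1) with h1 | h1
      · have hk' : m ≤ k := Nat.lt_succ_iff.mp h1
        exact hstep k (le_trans hmN hk') (ih hk')
      · have h2 : m = k + 1 := le_antisymm hk h1
        subst h2; exact hbm
  refine ⟨m, fun n hn => ?_⟩
  rw [Real.dist_eq, sub_zero, abs_of_nonneg (hb n)]
  linarith [hall n hn]
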